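/- Every first countable Hausdorff space which is a continuous image of some compact linearly ordered topological space is a continuous image of some first countable compact linearly ordered topological space. -/

import Mathlib

universe u

open Set Topology

/-- The character of a space `X` at a point `x`: the least cardinality of a
neighborhood base of `X` at `x`. -/
noncomputable def nhdsChar (X : Type u) [TopologicalSpace X] (x : X) : Cardinal.{u} :=
  sInf { c | ∃ B : Set (Set X), Cardinal.mk B = c ∧ (∀ U ∈ B, U ∈ nhds x) ∧
      ∀ V ∈ nhds x, ∃ U ∈ B, U ⊆ V }

/-- The character of a space: `χ(X) = sup_{x ∈ X} χ(x, X)`. -/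
noncomputable def spaceChar (X : Type u) [TopologicalSpace X] : Cardinal.{u} :=
  ⨆ x : X, nhdsChar X x

/-- The cellularity of a space: the supremum of cardinalities of pairwise disjoint
families of nonempty open subsets. -/
noncomputable def cellularity (X : Type u) [TopologicalSpace X] : Cardinal.{u} :=
  sSup { c | ∃ 𝒰 : Set (Set X), Cardinal.mk 𝒰 = c ∧ (∀ U ∈ 𝒰, IsOpen U ∧ U.Nonempty) ∧
      𝒰.PairwiseDisjoint id }

/-- The density of a space: the least cardinality of a dense subset. -/
noncomputable def density (X : Type u) [TopologicalSpace X] : Cardinal.{u} :=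
  sInf { c | ∃ D : Set X, Cardinal.mk D = c ∧ Dense D }

/-- The weight of a space: the least cardinality of a base for the topology. -/
noncomputable def weight (X : Type u) [TopologicalSpace X] : Cardinal.{u} :=
  sInf { c | ∃ B : Set (Set X), Cardinal.mk B = c ∧ TopologicalSpace.IsTopologicalBasis B }

/-- A surjective map is irreducible if no proper closed subset maps onto the codomain. -/
def IsIrreducibleMap {K : Type*} {X : Type*} [TopologicalSpace K] [TopologicalSpace X]
    (f : K → X) : Prop :=
  Function.Surjective f ∧ ∀ A : Set K, IsClosed A → A ≠ univ → f '' A ≠ univ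

/-- `C` is an order component of `A`: a maximal convex subset of `A`. -/
def IsOrderComponent {K : Type*} [LinearOrder K] (A C : Set K) : Prop :=
  C ⊆ A ∧ C.OrdConnected ∧ ∀ C' : Set K, C ⊆ C' → C' ⊆ A → C'.OrdConnected → C' = C

/-- A map from a linearly ordered set is order-light if every order component of every
fiber is a singleton. -/
def OrderLight {K : Type*} {X : Type*} [LinearOrder K] (f : K → X) : Prop :=
  ∀ x : X, ∀ C : Set K, IsOrderComponent (f ⁻¹' {x}) C → ∃ k, C = {k}

/-- The countable chain condition: every pairwise disjoint family of nonempty open sets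
is countable. -/
def CCC (X : Type*) [TopologicalSpace X] : Prop :=
  ∀ 𝒰 : Set (Set X), (∀ U ∈ 𝒰, IsOpen U ∧ U.Nonempty) → 𝒰.PairwiseDisjoint id → 𝒰.Countable

/-- A space is non-archimedean if it has a base any two members of which are either
disjoint or comparable by inclusion. -/
def NonArchimedean (X : Type*) [TopologicalSpace X] : Prop :=
  ∃ B : Set (Set X), TopologicalSpace.IsTopologicalBasis B ∧
    ∀ U ∈ B, ∀ V ∈ B, Disjoint U V ∨ U ⊆ V ∨ V ⊆ U

/-- A space is perfectly normal if it is normal and every closed set is a Gδ-set. -/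
def PerfNormal (X : Type*) [TopologicalSpace X] : Prop :=
  NormalSpace X ∧ ∀ A : Set X, IsClosed A → IsGδ A

/-- `X` is a continuous image of some compact linearly ordered topological space
(a linearly ordered set equipped with its order topology). -/
def ContinuousImageOfCompactLOTS (X : Type u) [TopologicalSpace X] : Prop :=
  ∃ (K : Type u) (lo : LinearOrder K) (tK : TopologicalSpace K),
    letI := lo; letI := tK;
    OrderTopology K ∧ CompactSpace K ∧ ∃ f : K → X, Continuous f ∧ Function.Surjective f

/-- A closed set `A` is a strong T-set: the boundary of each connected component of the
complement consists of exactly two points, and each such component is homeomorphic to the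
open unit interval `(0,1)`. -/
def IsStrongTSet {Y : Type*} [TopologicalSpace Y] (A : Set Y) : Prop :=
  IsClosed A ∧ ∀ x ∈ Aᶜ,
    (∃ a b : Y, a ≠ b ∧ frontier (connectedComponentIn Aᶜ x) = {a, b}) ∧
    Nonempty (↥(connectedComponentIn Aᶜ x) ≃ₜ ↥(Ioo (0:ℝ) 1))

/-- Souslin's Hypothesis: every ccc LOTS is separable. -/
def SouslinHypothesis : Prop :=
  ∀ (L : Type u) (lo : LinearOrder L) (tL : TopologicalSpace L),
    letI := lo; letI := tL;
    OrderTopology L → CCC L → TopologicalSpace.SeparableSpace L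

open Filter Function
set_option linter.unusedSectionVars false
set_option linter.unusedVariables false

section OrdQuot

variable {K : Type u} {X : Type u} [LinearOrder K]

/-- Two points are related if `f` is constant on the closed interval between them. -/
def ordRel (f : K → X) (a b : K) : Prop := ∀ z ∈ Set.uIcc a b, f z = f a

lemma ordRel_refl (f : K → X) (a : K) : ordRel f a a := by
  intro z hz; simp only [Set.uIcc_self, Set.mem_singleton_iff] at hz; rw [hz]

lemma ordRel.symm {f : K → X} {a b : K} (h : ordRel f a b) : ordRel f b a := by
  have hba : f b = f a := h b right_mem_uIcc
  intro z hz
  rw [uIcc_comm] at hz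
  rw [h z hz, hba]

lemma ordRel.trans {f : K → X} {a b c : K} (h1 : ordRel f a b) (h2 : ordRel f b c) :
    ordRel f a c := by
  have hba : f b = f a := h1 b right_mem_uIcc
  intro z hz
  rcases uIcc_subset_uIcc_union_uIcc (b := b) hz with h | h
  · exact h1 z h
  · rw [h2 z h, hba]

lemma ordRel.of_mem {f : K → X} {a b c : K} (h : ordRel f a b) (hc : c ∈ Set.uIcc a b) :
    ordRel f a c := fun z hz => h z (uIcc_subset_uIcc left_mem_uIcc hc hz)

lemma ordRel.crossing {f : K → X} {a b a' b' : K} (hab : a ≤ b) (hba : b' ≤ a')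
    (ha : ordRel f a a') (hb : ordRel f b b') : ordRel f a b := by
  by_cases h : b ≤ a'
  · exact ha.of_mem (mem_uIcc.2 (Or.inl ⟨hab, h⟩))
  · push_neg at h
    have hmem : a' ∈ Set.uIcc b b' := mem_uIcc.2 (Or.inr ⟨hba, h.le⟩)
    exact ha.trans ((hb.of_mem hmem).symm)

/-- The setoid collapsing maximal intervals of constancy of `f`. -/
def ordSetoid (f : K → X) : Setoid K := ⟨ordRel f, ⟨ordRel_refl f, ordRel.symm, ordRel.trans⟩⟩

/-- The quotient of `K` collapsing maximal intervals of constancy of `f`. -/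
def QL (f : K → X) : Type u := Quotient (ordSetoid f)

/-- Quotient map. -/
def qmk (f : K → X) (a : K) : QL f := Quotient.mk (ordSetoid f) a

lemma qmk_surjective (f : K → X) : Function.Surjective (qmk f) := fun q => Quotient.exists_rep q

lemma qmk_eq_iff {f : K → X} {a b : K} : qmk f a = qmk f b ↔ ordRel f a b :=
  ⟨fun h => Quotient.exact h, fun h => Quotient.sound h⟩

lemma qle_aux {f : K → X} {a b a' b' : K} (ha : ordRel f a a') (hb : ordRel f b b')
    (h : a ≤ b ∨ ordRel f a b) : a' ≤ b' ∨ ordRel f a' b' := by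
  rcases h with h | h
  · by_cases h' : a' ≤ b'
    · exact Or.inl h'
    · push_neg at h'
      exact Or.inr (ha.symm.trans (((ordRel.crossing h h'.le ha hb).trans hb)))
  · exact Or.inr (ha.symm.trans (h.trans hb))

/-- The order on the quotient. -/
def qle (f : K → X) : QL f → QL f → Prop :=
  Quotient.lift₂ (fun a b => a ≤ b ∨ ordRel f a b)
    (fun a b a' b' ha hb => propext ⟨qle_aux ha hb, qle_aux ha.symm hb.symm⟩)

lemma qle_mk {f : K → X} {a b : K} : qle f (qmk f a) (qmk f b) ↔ (a ≤ b ∨ ordRel f a b) :=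
  Iff.rfl

/-- The linear order on the quotient. -/
noncomputable def qLinearOrder (f : K → X) : LinearOrder (QL f) where
  le := qle f
  le_refl := fun q => Quotient.inductionOn q (fun a => Or.inl le_rfl)
  le_trans := fun q1 q2 q3 => Quotient.inductionOn₃ q1 q2 q3 (fun a b c h1 h2 => by
    rcases h1 with h1 | h1 <;> rcases h2 with h2 | h2
    · exact Or.inl (h1.trans h2)
    · by_cases h : a ≤ c
      · exact Or.inl h
      · push_neg at h
        exact Or.inr ((h2.of_mem (mem_uIcc.2 (Or.inr ⟨h.le, h1⟩))).symm.trans h2)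
    · by_cases h : a ≤ c
      · exact Or.inl h
      · push_neg at h
        exact Or.inr (h1.of_mem (mem_uIcc.2 (Or.inr ⟨h2, h.le⟩)))
    · exact Or.inr (h1.trans h2))
  le_antisymm := fun q1 q2 => Quotient.inductionOn₂ q1 q2 (fun a b h1 h2 => by
    apply Quotient.sound
    rcases h1 with h1 | h1
    · rcases h2 with h2 | h2
      · exact ordRel.crossing h1 h2 (ordRel_refl f a) (ordRel_refl f b)
      · exact h2.symm
    · exact h1)
  le_total := fun q1 q2 => Quotient.inductionOn₂ q1 q2 (fun a b =>
    (le_total a b).imp Or.inl Or.inl)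
  toDecidableLE := Classical.decRel _

end OrdQuot

section Topological

variable {K : Type u} {X : Type u} [LinearOrder K] [TopologicalSpace K] [OrderTopology K]
  [TopologicalSpace X]

lemma mem_class_self (f : K → X) (k : K) : k ∈ {b | ordRel f k b} := ordRel_refl f k

lemma class_subset_fiber (f : K → X) (k : K) : {b | ordRel f k b} ⊆ f ⁻¹' {f k} :=
  fun c hc => by
    have : f c = f k := hc c right_mem_uIcc
    simpa [Set.mem_preimage] using this

lemma isClosed_class [T1Space X] {f : K → X} (hf : Continuous f) (k : K) :
    IsClosed {b | ordRel f k b} := by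
  have hF : IsClosed (f ⁻¹' {f k}) := (isClosed_singleton).preimage hf
  refine isClosed_of_closure_subset ?_
  intro b hb
  have hbF : f b = f k := by
    have : b ∈ closure (f ⁻¹' {f k}) := closure_mono (class_subset_fiber f k) hb
    rw [hF.closure_eq] at this
    simpa using this
  intro z hz
  rcases eq_or_ne z b with rfl | hzb
  · exact hbF
  rcases hzb.lt_or_gt with hlt | hgt
  · -- z < b, so k ≤ z
    have hkz : k ≤ z := by
      rcases mem_uIcc.mp hz with ⟨h1, _⟩ | ⟨h1, _⟩
      · exact h1
      · exact absurd h1 (not_le.mpr hlt)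
    obtain ⟨t, htIoi, htS⟩ := mem_closure_iff.mp hb (Ioi z) isOpen_Ioi hlt
    exact htS z (mem_uIcc.2 (Or.inl ⟨hkz, le_of_lt htIoi⟩))
  · -- b < z, so z ≤ k
    have hzk : z ≤ k := by
      rcases mem_uIcc.mp hz with ⟨_, h2⟩ | ⟨_, h2⟩
      · exact absurd h2 (not_le.mpr hgt)
      · exact h2
    obtain ⟨t, htIio, htS⟩ := mem_closure_iff.mp hb (Iio z) isOpen_Iio hgt
    exact htS z (mem_uIcc.2 (Or.inr ⟨le_of_lt htIio, hzk⟩))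

variable [CompactSpace K] [T1Space X]

lemma exists_least_class {f : K → X} (hf : Continuous f) (k : K) :
    ∃ m, IsLeast {b | ordRel f k b} m :=
  ((isClosed_class hf k).isCompact).exists_isLeast ⟨k, mem_class_self f k⟩

lemma exists_greatest_class {f : K → X} (hf : Continuous f) (k : K) :
    ∃ m, IsGreatest {b | ordRel f k b} m :=
  ((isClosed_class hf k).isCompact).exists_isGreatest ⟨k, mem_class_self f k⟩

end Topological


section FirstCountable

variable {L : Type u} {X : Type u} [LinearOrder L] [TopologicalSpace L] [OrderTopology L]
  [TopologicalSpace X] [T1Space X] [FirstCountableTopology X]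

lemma biInf_principal_Ioi_countably_generated (g : L → X) (hg : Continuous g) (ℓ : L)
    (hlight : ∀ b, b < ℓ → (∃ c, b < c ∧ c < ℓ) → ∃ x, b < x ∧ x < ℓ ∧ g x ≠ g ℓ) :
    (⨅ b ∈ Iio ℓ, 𝓟 (Ioi b)).IsCountablyGenerated := by
  obtain ⟨A, hAc, hAsub, hAcof⟩ : ∃ A : Set L, A.Countable ∧ A ⊆ Iio ℓ ∧
      ∀ b ∈ Iio ℓ, ∃ a ∈ A, b ≤ a := by
    by_cases h1 : ∃ b, b < ℓ
    · by_cases h2 : ∃ m, m < ℓ ∧ ∀ b, b < ℓ → b ≤ m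
      · obtain ⟨m, hm, hmax⟩ := h2
        exact ⟨{m}, countable_singleton m, by simpa using hm,
          fun b hb => ⟨m, rfl, hmax b hb⟩⟩
      · push_neg at h2
        obtain ⟨V, hV⟩ := (𝓝 (g ℓ)).exists_antitone_basis
        have hmem : ∀ n, g ⁻¹' V n ∈ 𝓝 ℓ := fun n =>
          hg.continuousAt (hV.1.mem_of_mem trivial)
        choose a ha hsub using fun n => exists_Ioc_subset_of_mem_nhds (hmem n) h1
        refine ⟨range a, countable_range a, ?_, ?_⟩
        · rintro _ ⟨n, rfl⟩; exact ha n
        · intro b hb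
          by_contra hcon
          push_neg at hcon
          obtain ⟨c, hcl, hbc⟩ := h2 b hb
          obtain ⟨x, hbx, hxl, hgx⟩ := hlight b hb ⟨c, hbc, hcl⟩
          have hxV : ∀ n, g x ∈ V n := by
            intro n
            have han : a n < b := by
              have := hcon (a n) ⟨n, rfl⟩
              exact this
            exact hsub n ⟨han.trans hbx, hxl.le⟩
          obtain ⟨n, -, hn⟩ := hV.1.mem_iff.mp (compl_singleton_mem_nhds (Ne.symm hgx))
          exact hn (hxV n) rfl
    · push_neg at h1
      exact ⟨∅, countable_empty, empty_subset _,
        fun b hb => absurd hb (by simpa using h1 b)⟩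
  have heq : (⨅ b ∈ Iio ℓ, 𝓟 (Ioi b)) = ⨅ a ∈ A, 𝓟 (Ioi a) := by
    apply le_antisymm
    · exact le_iInf₂ fun a ha => iInf₂_le a (hAsub ha)
    · refine le_iInf₂ fun b hb => ?_
      obtain ⟨a, haA, hba⟩ := hAcof b hb
      exact iInf₂_le_of_le a haA (principal_mono.2 (Ioi_subset_Ioi hba))
  rw [heq]
  have : (⨅ a ∈ A, 𝓟 (Ioi a)) = ⨅ s ∈ (Ioi '' A), 𝓟 s := by
    rw [iInf_image]
  rw [this]
  exact Filter.isCountablyGenerated_biInf_principal (hAc.image _)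

lemma biInf_principal_Iio_countably_generated (g : L → X) (hg : Continuous g) (ℓ : L)
    (hlight : ∀ b, ℓ < b → (∃ c, ℓ < c ∧ c < b) → ∃ x, ℓ < x ∧ x < b ∧ g x ≠ g ℓ) :
    (⨅ b ∈ Ioi ℓ, 𝓟 (Iio b)).IsCountablyGenerated := by
  obtain ⟨A, hAc, hAsub, hAcof⟩ : ∃ A : Set L, A.Countable ∧ A ⊆ Ioi ℓ ∧
      ∀ b ∈ Ioi ℓ, ∃ a ∈ A, a ≤ b := by
    by_cases h1 : ∃ b, ℓ < b
    · by_cases h2 : ∃ m, ℓ < m ∧ ∀ b, ℓ < b → m ≤ b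
      · obtain ⟨m, hm, hmin⟩ := h2
        exact ⟨{m}, countable_singleton m, by simpa using hm,
          fun b hb => ⟨m, rfl, hmin b hb⟩⟩
      · push_neg at h2
        obtain ⟨V, hV⟩ := (𝓝 (g ℓ)).exists_antitone_basis
        have hmem : ∀ n, g ⁻¹' V n ∈ 𝓝 ℓ := fun n =>
          hg.continuousAt (hV.1.mem_of_mem trivial)
        choose a ha hsub using fun n => exists_Ico_subset_of_mem_nhds (hmem n) h1
        refine ⟨range a, countable_range a, ?_, ?_⟩
        · rintro _ ⟨n, rfl⟩; exact ha n
        · intro b hb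
          by_contra hcon
          push_neg at hcon
          obtain ⟨c, hcl, hbc⟩ := h2 b hb
          obtain ⟨x, hbx, hxl, hgx⟩ := hlight b hb ⟨c, hcl, hbc⟩
          have hxV : ∀ n, g x ∈ V n := by
            intro n
            have han : b < a n := by
              have := hcon (a n) ⟨n, rfl⟩
              exact this
            exact hsub n ⟨hbx.le, hxl.trans han⟩
          obtain ⟨n, -, hn⟩ := hV.1.mem_iff.mp (compl_singleton_mem_nhds (Ne.symm hgx))
          exact hn (hxV n) rfl
    · push_neg at h1
      exact ⟨∅, countable_empty, empty_subset _,
        fun b hb => absurd hb (by simpa using h1 b)⟩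
  have heq : (⨅ b ∈ Ioi ℓ, 𝓟 (Iio b)) = ⨅ a ∈ A, 𝓟 (Iio a) := by
    apply le_antisymm
    · exact le_iInf₂ fun a ha => iInf₂_le a (hAsub ha)
    · refine le_iInf₂ fun b hb => ?_
      obtain ⟨a, haA, hba⟩ := hAcof b hb
      exact iInf₂_le_of_le a haA (principal_mono.2 (Iio_subset_Iio hba))
  rw [heq]
  have : (⨅ a ∈ A, 𝓟 (Iio a)) = ⨅ s ∈ (Iio '' A), 𝓟 s := by
    rw [iInf_image]
  rw [this]
  exact Filter.isCountablyGenerated_biInf_principal (hAc.image _)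

end FirstCountable

theorem exists_firstCountable_LOTS_image {K : Type u} {X : Type u} [LinearOrder K]
    [TopologicalSpace K] [OrderTopology K] [CompactSpace K]
    [TopologicalSpace X] [T2Space X] [FirstCountableTopology X]
    (f : K → X) (hf : Continuous f) (hs : Function.Surjective f) :
    ∃ (L : Type u) (lo : LinearOrder L) (tL : TopologicalSpace L),
      letI := lo; letI := tL;
      OrderTopology L ∧ CompactSpace L ∧ FirstCountableTopology L ∧
        ∃ g : L → X, Continuous g ∧ Function.Surjective g := by
  letI lo := qLinearOrder f
  letI tQ := Preorder.topology (QL f)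
  haveI hOT : OrderTopology (QL f) := ⟨rfl⟩
  -- characterization of < on the quotient via least/greatest elements of classes
  have hlt_iff : ∀ {y m x : K}, IsLeast {b | ordRel f y b} m →
      (qmk f x < qmk f y ↔ x < m) := by
    intro y m x hm
    have hmy : m ≤ y := hm.2 (mem_class_self f y)
    constructor
    · intro h
      rw [lt_iff_le_not_ge] at h
      have hnotrel : ¬ ordRel f y x := fun hr => h.2 (Or.inr hr)
      have hxy : x ≤ y := by
        rcases (h.1 : x ≤ y ∨ ordRel f x y) with h' | h'
        · exact h'
        · exact absurd h'.symm hnotrel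
      by_contra hmx
      push_neg at hmx
      exact hnotrel (hm.1.of_mem (mem_uIcc.2 (Or.inr ⟨hmx, hxy⟩)))
    · intro hxm
      rw [lt_iff_le_not_ge]
      refine ⟨Or.inl (hxm.le.trans hmy), ?_⟩
      rintro (h | h)
      · exact absurd (lt_of_lt_of_le hxm (hmy.trans h)) (lt_irrefl x)
      · exact absurd (hm.2 h) (not_le.mpr hxm)
  have hlt_iff' : ∀ {y M x : K}, IsGreatest {b | ordRel f y b} M →
      (qmk f y < qmk f x ↔ M < x) := by
    intro y M x hM
    have hyM : y ≤ M := hM.2 (mem_class_self f y)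
    constructor
    · intro h
      rw [lt_iff_le_not_ge] at h
      have hnotrel : ¬ ordRel f y x := fun hr => h.2 (Or.inr hr.symm)
      have hyx : y ≤ x := by
        rcases (h.1 : y ≤ x ∨ ordRel f y x) with h' | h'
        · exact h'
        · exact absurd h' hnotrel
      by_contra hxM
      push_neg at hxM
      exact hnotrel (hM.1.of_mem (mem_uIcc.2 (Or.inl ⟨hyx, hxM⟩)))
    · intro hMx
      rw [lt_iff_le_not_ge]
      refine ⟨Or.inl (hyM.trans hMx.le), ?_⟩
      rintro (h | h)
      · exact absurd (lt_of_lt_of_le hMx (h.trans hyM)) (lt_irrefl M)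
      · exact absurd (hM.2 h.symm) (not_le.mpr hMx)
  -- continuity of the quotient map
  have hq_cont : Continuous (qmk f) := by
    refine continuous_generateFrom_iff.mpr ?_
    rintro s ⟨a, rfl | rfl⟩
    · obtain ⟨y, rfl⟩ := Quotient.exists_rep a
      obtain ⟨M, hM⟩ := exists_greatest_class hf y
      have : qmk f ⁻¹' (Ioi (qmk f y)) = Ioi M := by
        ext x
        simp only [Set.mem_preimage, Set.mem_Ioi]
        exact hlt_iff' hM
      exact this ▸ isOpen_Ioi
    · obtain ⟨y, rfl⟩ := Quotient.exists_rep a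
      obtain ⟨m, hm⟩ := exists_least_class hf y
      have : qmk f ⁻¹' (Iio (qmk f y)) = Iio m := by
        ext x
        simp only [Set.mem_preimage, Set.mem_Iio]
        exact hlt_iff hm
      exact this ▸ isOpen_Iio
  have hq_surj : Function.Surjective (qmk f) := qmk_surjective f
  haveI : CompactSpace (QL f) := ⟨by
    rw [← hq_surj.range_eq]
    exact isCompact_range hq_cont⟩
  haveI : T2Space (QL f) := OrderClosedTopology.to_t2Space
  have hqm : IsQuotientMap (qmk f) := (hq_cont.isClosedMap).isQuotientMap hq_cont hq_surj
  set g : QL f → X := Quotient.lift f (fun a b h => (h b right_mem_uIcc).symm) with hg_def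
  have hg_cont : Continuous g := hqm.continuous_iff.mpr hf
  have hg_surj : Function.Surjective g := fun x => by
    obtain ⟨k, hk⟩ := hs x
    exact ⟨qmk f k, hk⟩
  -- the quotient is first countable
  haveI : FirstCountableTopology (QL f) := by
    constructor
    intro ℓ
    rw [nhds_eq_order ℓ]
    have hleft : (⨅ b ∈ Iio ℓ, 𝓟 (Ioi b)).IsCountablyGenerated := by
      refine biInf_principal_Ioi_countably_generated g hg_cont ℓ ?_
      rintro b hb ⟨c, hbc, hcl⟩
      by_contra hcon
      push_neg at hcon
      obtain ⟨k, rfl⟩ := Quotient.exists_rep ℓ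
      obtain ⟨β, rfl⟩ := Quotient.exists_rep c
      have hβk : β ≤ k := by
        rcases (le_of_lt hcl : β ≤ k ∨ ordRel f β k) with h | h
        · exact h
        · exact ((ne_of_lt hcl) (Quotient.sound h)).elim
      have hrel : ordRel f β k := by
        intro z hz
        rw [uIcc_of_le hβk] at hz
        have h1 : qmk f β ≤ qmk f z := Or.inl hz.1
        have h2 : qmk f z ≤ qmk f k := Or.inl hz.2
        have hfz : f z = f k := by
          rcases lt_or_eq_of_le h2 with hlt2 | heq2
          · exact hcon (qmk f z) (lt_of_lt_of_le hbc h1) hlt2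
          · exact ((Quotient.exact heq2 : ordRel f z k) k right_mem_uIcc).symm
        have hfβ : f β = f k := hcon (qmk f β) hbc hcl
        rw [hfz, hfβ]
      exact (ne_of_lt hcl) (Quotient.sound hrel)
    have hright : (⨅ b ∈ Ioi ℓ, 𝓟 (Iio b)).IsCountablyGenerated := by
      refine biInf_principal_Iio_countably_generated g hg_cont ℓ ?_
      rintro b hb ⟨c, hcl, hcb⟩
      by_contra hcon
      push_neg at hcon
      obtain ⟨k, rfl⟩ := Quotient.exists_rep ℓ
      obtain ⟨β, rfl⟩ := Quotient.exists_rep c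
      have hkβ : k ≤ β := by
        rcases (le_of_lt hcl : k ≤ β ∨ ordRel f k β) with h | h
        · exact h
        · exact absurd (Quotient.sound h.symm) (ne_of_lt hcl).symm
      have hrel : ordRel f k β := by
        intro z hz
        rw [uIcc_of_le hkβ] at hz
        have h1 : qmk f k ≤ qmk f z := Or.inl hz.1
        have h2 : qmk f z ≤ qmk f β := Or.inl hz.2
        rcases lt_or_eq_of_le h1 with hlt1 | heq1
        · exact hcon (qmk f z) hlt1 (lt_of_le_of_lt h2 hcb)
        · exact ((Quotient.exact heq1 : ordRel f k z) z right_mem_uIcc)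
      exact absurd (Quotient.sound hrel.symm) (ne_of_lt hcl).symm
    haveI := hleft
    haveI := hright
    infer_instance
  exact ⟨QL f, lo, tQ, ⟨rfl⟩, inferInstance, inferInstance, g, hg_cont, hg_surj⟩

theorem image_of_firstCountable_compact_LOTS (X : Type u) [TopologicalSpace X] [T2Space X]
    [FirstCountableTopology X] (hX : ContinuousImageOfCompactLOTS X) :
    ∃ (K : Type u) (lo : LinearOrder K) (tK : TopologicalSpace K),
      letI := lo; letI := tK;
      OrderTopology K ∧ CompactSpace K ∧ FirstCountableTopology K ∧
        ∃ f : K → X, Continuous f ∧ Function.Surjective f := by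
  obtain ⟨K, lo, tK, hOT, hComp, f, hf, hsurj⟩ := hX
  letI := lo
  letI := tK
  haveI := hOT
  haveI := hComp
  exact exists_firstCountable_LOTS_image f hf hsurj
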